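/- Let p'_n = Σ_{i=0}^{2n} (2n)!/i! and q'_n = Σ_{i=0}^{2n} (−1)^i·(2n)!/i!. Then 0 < q'_n·e² − p'_n and |q'_n·e² − p'_n| → 0 as n → ∞; consequently e² is irrational. -/

import Mathlib

open Finset Filter Real
open scoped Topology

theorem stmt_17 (p' q' : ℕ → ℤ)
    (hp : ∀ n, p' n = ∑ i ∈ Finset.range (2 * n + 1), (Nat.factorial (2 * n) / Nat.factorial i : ℕ))
    (hq : ∀ n, q' n = ∑ i ∈ Finset.range (2 * n + 1),
      (-1 : ℤ) ^ i * ((Nat.factorial (2 * n) / Nat.factorial i : ℕ) : ℤ)) :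
    (∀ n, 0 < (q' n : ℝ) * Real.exp 1 ^ 2 - p' n) ∧
    Filter.Tendsto (fun n => |(q' n : ℝ) * Real.exp 1 ^ 2 - p' n|) Filter.atTop (nhds 0) ∧
    Irrational (Real.exp 1 ^ 2) := by
  classical
  set f : ℕ → ℝ := fun i => 1 / (i.factorial : ℝ) with hf
  have hfpos : ∀ i, 0 < f i := fun i => by
    simp only [hf]; positivity
  have hanti : Antitone f := by
    intro i j hij
    simp only [hf]
    apply one_div_le_one_div_of_le
    · exact_mod_cast (Nat.factorial_pos i)
    · exact_mod_cast Nat.factorial_le hij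
  -- exp 1 as a sum
  have hesum : HasSum f (Real.exp 1) := by
    have h := NormedSpace.expSeries_div_hasSum_exp (1 : ℝ)
    rw [← Real.exp_eq_exp_ℝ] at h
    simpa [hf] using h
  -- exp (-1) as limit of alternating partial sums
  have hneg : Tendsto (fun m => ∑ i ∈ range m, (-1 : ℝ) ^ i * f i) atTop (𝓝 (Real.exp (-1))) := by
    have h := NormedSpace.expSeries_div_hasSum_exp (-1 : ℝ)
    rw [← Real.exp_eq_exp_ℝ] at h
    have h2 := h.tendsto_sum_nat
    have : (fun m => ∑ i ∈ range m, (-1 : ℝ) ^ i / (i.factorial : ℝ)) =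
        fun m => ∑ i ∈ range m, (-1 : ℝ) ^ i * f i := by
      funext m
      exact Finset.sum_congr rfl fun i _ => by rw [hf, div_eq_mul_one_div]
    rwa [this] at h2
  -- casting the integer sums
  have hcast : ∀ n, ∀ i ∈ range (2 * n + 1),
      ((Nat.factorial (2 * n) / Nat.factorial i : ℕ) : ℝ) = ((2 * n).factorial : ℝ) * f i := by
    intro n i hi
    have hle : i ≤ 2 * n := by have := Finset.mem_range.mp hi; omega
    rw [Nat.cast_div (Nat.factorial_dvd_factorial hle)
      (by exact_mod_cast (Nat.factorial_pos i).ne'), hf, mul_one_div]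
  have hpR : ∀ n, (p' n : ℝ) = ((2 * n).factorial : ℝ) * ∑ i ∈ range (2 * n + 1), f i := by
    intro n
    rw [hp n, Finset.mul_sum]
    push_cast
    exact Finset.sum_congr rfl fun i hi => hcast n i hi
  have hqR : ∀ n, (q' n : ℝ) =
      ((2 * n).factorial : ℝ) * ∑ i ∈ range (2 * n + 1), (-1 : ℝ) ^ i * f i := by
    intro n
    rw [hq n, Finset.mul_sum]
    rw [Int.cast_sum]
    refine Finset.sum_congr rfl fun i hi => ?_
    rw [Int.cast_mul, Int.cast_pow, Int.cast_neg, Int.cast_one, Int.cast_natCast,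
      hcast n i hi]
    ring
  have hmul : Real.exp 1 ^ 2 * Real.exp (-1) = Real.exp 1 := by
    rw [sq, mul_assoc, ← Real.exp_add]
    norm_num
  have hFpos : ∀ n, (0 : ℝ) < ((2 * n).factorial : ℝ) := fun n => by
    exact_mod_cast (2 * n).factorial_pos
  -- alternating series bounds
  have hS0 : ∀ n, Real.exp (-1) ≤ ∑ i ∈ range (2 * n + 1), (-1 : ℝ) ^ i * f i := fun n =>
    hanti.tendsto_le_alternating_series hneg n
  have hS1 : ∀ n, ∑ i ∈ range (2 * n + 1), (-1 : ℝ) ^ i * f i ≤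
      Real.exp (-1) + f (2 * n + 1) := by
    intro n
    have h := hanti.alternating_series_le_tendsto hneg (n + 1)
    rw [show 2 * (n + 1) = (2 * n + 1) + 1 by ring, sum_range_succ] at h
    have hodd : (-1 : ℝ) ^ (2 * n + 1) = -1 := Odd.neg_one_pow ⟨n, by ring⟩
    rw [hodd] at h
    linarith
  have hRlow : ∀ n, ∑ i ∈ range (2 * n + 1), f i + f (2 * n + 1) ≤ Real.exp 1 := by
    intro n
    have h := sum_le_hasSum (range (2 * n + 2)) (fun i _ => (hfpos i).le) hesum
    rwa [show 2 * n + 2 = (2 * n + 1) + 1 by ring, sum_range_succ] at h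
  have hRhigh : ∀ n, Real.exp 1 - ∑ i ∈ range (2 * n + 1), f i ≤
      (((2 * n + 1 : ℕ) : ℝ) + 1) / (((2 * n + 1).factorial : ℝ) * ((2 * n + 1 : ℕ) : ℝ)) := by
    intro n
    have hb := Real.exp_bound (x := 1) (by norm_num) (n := 2 * n + 1) (by omega)
    simp only [one_pow, abs_one, one_mul] at hb
    have h2 := (abs_le.mp hb).2
    simp only [hf]
    push_cast at h2 ⊢
    linarith
  -- the key quantity
  have hxpos : ∀ n, 0 < (q' n : ℝ) * Real.exp 1 ^ 2 - p' n := by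
    intro n
    rw [hpR n, hqR n]
    have h1 : (0:ℝ) ≤ Real.exp 1 ^ 2 *
        ((∑ i ∈ range (2 * n + 1), (-1 : ℝ) ^ i * f i) - Real.exp (-1)) :=
      mul_nonneg (by positivity) (by linarith [hS0 n])
    have h2 : f (2 * n + 1) ≤ Real.exp 1 - ∑ i ∈ range (2 * n + 1), f i := by
      linarith [hRlow n]
    have key : 0 < (∑ i ∈ range (2 * n + 1), (-1 : ℝ) ^ i * f i) * Real.exp 1 ^ 2 -
        ∑ i ∈ range (2 * n + 1), f i := by
      nlinarith [hfpos (2 * n + 1), hmul]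
    nlinarith [hFpos n]
  have hxbound : ∀ n, (q' n : ℝ) * Real.exp 1 ^ 2 - p' n ≤
      (Real.exp 1 ^ 2 + 2) / ((2 * n + 1 : ℕ) : ℝ) := by
    intro n
    set A := ∑ i ∈ range (2 * n + 1), (-1 : ℝ) ^ i * f i with hA
    set B := ∑ i ∈ range (2 * n + 1), f i with hB
    set F := ((2 * n).factorial : ℝ) with hFdef
    set m := ((2 * n + 1 : ℕ) : ℝ) with hm
    have hm1 : (1 : ℝ) ≤ m := by rw [hm]; exact_mod_cast Nat.succ_le_succ (Nat.zero_le _)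
    have hG : ((2 * n + 1).factorial : ℝ) = m * F := by
      rw [hm, hFdef, Nat.factorial_succ]; push_cast; ring
    have hf1 : f (2 * n + 1) = 1 / (m * F) := by simp only [hf]; rw [hG]
    rw [hpR n, hqR n, ← hA, ← hB, ← hFdef]
    -- bound the two remainder pieces
    have hS : A - Real.exp (-1) ≤ 1 / (m * F) := by
      have := hS1 n; rw [hf1] at this; linarith
    have hS' : 0 ≤ A - Real.exp (-1) := by linarith [hS0 n]
    have hR : Real.exp 1 - B ≤ (m + 1) / (m * F * m) := by
      have h3 := hRhigh n
      rw [hG, ← hm, ← hB] at h3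
      exact h3
    have hdecomp : F * A * Real.exp 1 ^ 2 - F * B =
        F * (Real.exp 1 ^ 2 * (A - Real.exp (-1)) + (Real.exp 1 - B)) := by
      nlinarith [hmul]
    rw [hdecomp]
    have hFpos' := hFpos n; rw [← hFdef] at hFpos'
    have hstep : F * (Real.exp 1 ^ 2 * (A - Real.exp (-1)) + (Real.exp 1 - B)) ≤
        F * (Real.exp 1 ^ 2 * (1 / (m * F)) + (m + 1) / (m * F * m)) := by
      apply mul_le_mul_of_nonneg_left _ hFpos'.le
      have : Real.exp 1 ^ 2 * (A - Real.exp (-1)) ≤ Real.exp 1 ^ 2 * (1 / (m * F)) :=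
        mul_le_mul_of_nonneg_left hS (by positivity)
      linarith
    refine hstep.trans ?_
    have hm0 : m ≠ 0 := by positivity
    have hF0 : F ≠ 0 := ne_of_gt hFpos'
    have heq : F * (Real.exp 1 ^ 2 * (1 / (m * F)) + (m + 1) / (m * F * m)) =
        Real.exp 1 ^ 2 / m + (m + 1) / (m * m) := by
      field_simp
    rw [heq]
    have h2 : (m + 1) / (m * m) ≤ 2 / m := by
      rw [div_le_div_iff₀ (by positivity) (by linarith)]
      nlinarith
    have : (Real.exp 1 ^ 2 + 2) / m = Real.exp 1 ^ 2 / m + 2 / m := by ring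
    rw [this]
    linarith
  have htend : Tendsto (fun n => |(q' n : ℝ) * Real.exp 1 ^ 2 - p' n|) atTop (𝓝 0) := by
    have hg : Tendsto (fun n : ℕ => (Real.exp 1 ^ 2 + 2) / ((2 * n + 1 : ℕ) : ℝ)) atTop (𝓝 0) := by
      have h2 : Tendsto (fun n : ℕ => 2 * n + 1) atTop atTop :=
        tendsto_atTop_mono (fun n => by omega : ∀ n : ℕ, n ≤ 2 * n + 1) tendsto_id
      exact (tendsto_const_div_atTop_nhds_zero_nat _).comp h2
    refine squeeze_zero (fun n => abs_nonneg _) (fun n => ?_) hg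
    rw [abs_of_pos (hxpos n)]
    exact hxbound n
  refine ⟨hxpos, htend, ?_⟩
  -- irrationality
  rw [Irrational]
  intro hrat
  obtain ⟨r, hr⟩ := hrat
  have hbpos : (0 : ℝ) < (r.den : ℝ) := by exact_mod_cast r.pos
  -- eventually |x_n| < 1/r.den
  have hev : ∀ᶠ n in atTop, |(q' n : ℝ) * Real.exp 1 ^ 2 - p' n| < 1 / (r.den : ℝ) := by
    have := htend (Metric.ball_mem_nhds (0 : ℝ) (by positivity : (0:ℝ) < 1 / (r.den : ℝ)))
    filter_upwards [this] with n hn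
    simpa [Real.dist_eq] using hn
  obtain ⟨n, hn⟩ := hev.exists
  -- but x_n ≥ 1/r.den
  have hx := hxpos n
  rw [← hr] at hx hn
  have hz : (0 : ℝ) < (q' n : ℝ) * r - p' n := by
    rw [Rat.cast_def] at hx; rwa [Rat.cast_def]
  set z : ℤ := q' n * r.num - p' n * r.den with hzdef
  have hzval : (z : ℝ) = (r.den : ℝ) * ((q' n : ℝ) * r - p' n) := by
    rw [hzdef, Rat.cast_def]
    push_cast
    field_simp
  have hzpos : (0 : ℤ) < z := by
    have : (0 : ℝ) < (z : ℝ) := by rw [hzval]; positivity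
    exact_mod_cast this
  have hz1 : (1 : ℝ) ≤ (z : ℝ) := by exact_mod_cast hzpos
  rw [hzval] at hz1
  rw [abs_of_pos hz] at hn
  have hlt : ((q' n : ℝ) * r - p' n) * r.den < 1 := (lt_div_iff₀ hbpos).mp hn
  nlinarith
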